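/- Let F₀ be a real number with 1/2 < F₀ < 1/√2, let 0 < ε < 1/2, and define the purification fidelity sequence by F_n = F_{n-1}² / (F_{n-1}² + (1 - F_{n-1})²) for n ≥ 1. Then there exists a natural number m with m ≤ ⌈(-log₂(F₀·√2)) / log₂(F₀ + 1/2)⌉ + ⌈log₂(log₂(1/ε))⌉ such that F_m ≥ 1 - ε. -/

import Mathlib

set_option maxHeartbeats 1000000 in
/-- Starting from `1/2 < F 0 < 1/√2`, at most
`⌈(-log₂(F₀·√2)) / log₂(F₀ + 1/2)⌉ + ⌈log₂ log₂ (1/ε)⌉` purification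
repetitions suffice to reach fidelity at least `1 - ε`. -/
theorem purification_total_repetitions (F : ℕ → ℝ) (ε : ℝ)
    (h0 : 1 / 2 < F 0) (h1 : F 0 < 1 / Real.sqrt 2)
    (hε0 : 0 < ε) (hε1 : ε < 1 / 2)
    (hrec : ∀ n : ℕ, F (n + 1) = (F n) ^ 2 / ((F n) ^ 2 + (1 - F n) ^ 2)) :
    ∃ m : ℕ,
      m ≤ ⌈(-Real.logb 2 (F 0 * Real.sqrt 2)) / Real.logb 2 (F 0 + 1 / 2)⌉₊ +
            ⌈Real.logb 2 (Real.logb 2 (1 / ε))⌉₊ ∧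
      F m ≥ 1 - ε := by
  have hs2 : (1:ℝ) < Real.sqrt 2 := by
    have := Real.sqrt_lt_sqrt (by norm_num : (0:ℝ) ≤ 1) (by norm_num : (1:ℝ) < 2)
    simpa using this
  have hs2pos : (0:ℝ) < Real.sqrt 2 := by linarith
  have hsq : Real.sqrt 2 ^ 2 = 2 := Real.sq_sqrt (by norm_num)
  -- invariant: 1/2 < F n < 1
  have hbound : ∀ n, 1/2 < F n ∧ F n < 1 := by
    intro n
    induction n with
    | zero =>
      constructor
      · exact h0
      · have : 1 / Real.sqrt 2 < 1 := by
          rw [div_lt_one hs2pos]; exact hs2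
        linarith
    | succ k ih =>
      obtain ⟨hl, hr⟩ := ih
      have hD : (0:ℝ) < (F k) ^ 2 + (1 - F k) ^ 2 := by nlinarith
      rw [hrec k]
      constructor
      · rw [lt_div_iff₀ hD]; nlinarith
      · rw [div_lt_one hD]; nlinarith
  -- monotone
  have hstep_mono : ∀ n, F n ≤ F (n + 1) := by
    intro n
    obtain ⟨hl, hr⟩ := hbound n
    have hD : (0:ℝ) < (F n) ^ 2 + (1 - F n) ^ 2 := by nlinarith
    have key : F n * ((2*F n - 1)*(F n - 1)) ≤ 0 :=
      mul_nonpos_of_nonneg_of_nonpos (by linarith)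
        (mul_nonpos_of_nonneg_of_nonpos (by linarith) (by linarith))
    rw [hrec n, le_div_iff₀ hD]; nlinarith [key]
  have hmono : Monotone F := monotone_nat_of_le_succ hstep_mono
  -- ratio dynamics
  have hx : ∀ n, F (n+1) / (1 - F (n+1)) = (F n / (1 - F n)) ^ 2 := by
    intro n
    obtain ⟨hl, hr⟩ := hbound n
    have hD : (0:ℝ) < (F n) ^ 2 + (1 - F n) ^ 2 := by nlinarith
    have hDne : (F n) ^ 2 + (1 - F n) ^ 2 ≠ 0 := ne_of_gt hD
    have h1F : 1 - F n ≠ 0 := by linarith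
    have h1mF : 1 - (F n) ^ 2 / ((F n) ^ 2 + (1 - F n) ^ 2)
        = (1 - F n) ^ 2 / ((F n) ^ 2 + (1 - F n) ^ 2) := by
      field_simp
      ring
    rw [hrec n, h1mF]
    rw [div_div_div_eq]
    field_simp
  have hxpow : ∀ n k, F (n+k) / (1 - F (n+k)) = (F n / (1 - F n)) ^ (2^k) := by
    intro n k
    induction k with
    | zero => simp
    | succ j ih =>
      have hnj : n + (j+1) = (n+j) + 1 := by ring
      rw [hnj, hx (n+j), ih, ← pow_mul, pow_succ]
  have hc : 1 < F 0 + 1/2 := by linarith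
  set N₁ : ℕ := ⌈(-Real.logb 2 (F 0 * Real.sqrt 2)) / Real.logb 2 (F 0 + 1 / 2)⌉₊ with hN₁
  set N₂ : ℕ := ⌈Real.logb 2 (Real.logb 2 (1 / ε))⌉₊ with hN₂
  -- phase 1 growth step
  have hgrow : ∀ n, F n ≤ 1 / Real.sqrt 2 → F n * (F 0 + 1/2) ≤ F (n+1) := by
    intro n hn
    obtain ⟨hl, hr⟩ := hbound n
    have hD : (0:ℝ) < (F n) ^ 2 + (1 - F n) ^ 2 := by nlinarith
    have hF2 : F n ^ 2 ≤ 1/2 := by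
      have h2 : F n ^ 2 ≤ (1 / Real.sqrt 2)^2 := by
        apply pow_le_pow_left₀ (by linarith) hn
      rw [div_pow, hsq] at h2
      simpa using h2
    have hcle : F 0 + 1/2 ≤ F n + 1/2 := by
      have := hmono (Nat.zero_le n)
      linarith
    have key : (2 * F n - 1) * (F n ^ 2 - 1/2) ≤ 0 :=
      mul_nonpos_of_nonneg_of_nonpos (by linarith) (by linarith)
    have key2 : F n * ((2 * F n - 1) * (F n ^ 2 - 1/2)) ≤ 0 :=
      mul_nonpos_of_nonneg_of_nonpos (by linarith) key
    have hint2 : (F 0 + 1/2) * (F n * (F n^2 + (1 - F n)^2))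
        ≤ (F n + 1/2) * (F n * (F n^2 + (1 - F n)^2)) :=
      mul_le_mul_of_nonneg_right hcle
        (le_of_lt (mul_pos (by linarith : (0:ℝ) < F n) hD))
    rw [hrec n, le_div_iff₀ hD]
    nlinarith [key2, hint2]
  -- phase 1: reach 1/√2 within N₁ steps
  have phase1 : ∃ n₁, n₁ ≤ N₁ ∧ 1 / Real.sqrt 2 ≤ F n₁ := by
    by_contra hcon
    push_neg at hcon
    have hall : ∀ k ≤ N₁, F k < 1 / Real.sqrt 2 := fun k hk => hcon k hk
    have growth : ∀ k, k ≤ N₁ → F 0 * (F 0 + 1/2) ^ k ≤ F k := by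
      intro k
      induction k with
      | zero => simp
      | succ j ih =>
        intro hj
        have hj' : j ≤ N₁ := Nat.le_of_succ_le hj
        have hih := ih hj'
        have h2 := hgrow j (le_of_lt (hall j hj'))
        calc F 0 * (F 0 + 1/2) ^ (j+1) = (F 0 * (F 0 + 1/2) ^ j) * (F 0 + 1/2) := by ring
          _ ≤ F j * (F 0 + 1/2) := mul_le_mul_of_nonneg_right hih (by linarith)
          _ ≤ F (j+1) := h2
    have hFs2pos : 0 < F 0 * Real.sqrt 2 := mul_pos (by linarith) hs2pos
    have hFs2lt1 : F 0 * Real.sqrt 2 < 1 := by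
      have h2 := h1
      rw [lt_div_iff₀ hs2pos] at h2
      exact h2
    have hlogc : 0 < Real.logb 2 (F 0 + 1/2) := Real.logb_pos (by norm_num) hc
    have hnum : 0 ≤ -Real.logb 2 (F 0 * Real.sqrt 2) := by
      have : Real.logb 2 (F 0 * Real.sqrt 2) ≤ 0 :=
        Real.logb_nonpos (by norm_num) (le_of_lt hFs2pos) (le_of_lt hFs2lt1)
      linarith
    set r : ℝ := (-Real.logb 2 (F 0 * Real.sqrt 2)) / Real.logb 2 (F 0 + 1/2) with hr_def
    have hrN : r ≤ (N₁ : ℝ) := by rw [hN₁]; exact Nat.le_ceil _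
    have hcpos : (0:ℝ) < F 0 + 1/2 := by linarith
    have hcr : (F 0 + 1/2) ^ r = (F 0 * Real.sqrt 2)⁻¹ := by
      have h2 : F 0 + 1/2 = (2:ℝ) ^ Real.logb 2 (F 0 + 1/2) :=
        (Real.rpow_logb (by norm_num) (by norm_num) hcpos).symm
      calc (F 0 + 1/2) ^ r = ((2:ℝ) ^ Real.logb 2 (F 0 + 1/2)) ^ r := by rw [← h2]
        _ = (2:ℝ) ^ (Real.logb 2 (F 0 + 1/2) * r) := by
            rw [← Real.rpow_mul (by norm_num)]
        _ = (2:ℝ) ^ (-Real.logb 2 (F 0 * Real.sqrt 2)) := by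
            congr 1
            rw [hr_def, mul_comm, div_mul_cancel₀ _ (ne_of_gt hlogc)]
        _ = ((2:ℝ) ^ (Real.logb 2 (F 0 * Real.sqrt 2)))⁻¹ := by
            rw [Real.rpow_neg (by norm_num)]
        _ = (F 0 * Real.sqrt 2)⁻¹ := by
            rw [Real.rpow_logb (by norm_num) (by norm_num) hFs2pos]
    have hcN : (F 0 * Real.sqrt 2)⁻¹ ≤ (F 0 + 1/2) ^ (N₁:ℕ) := by
      rw [← Real.rpow_natCast (F 0 + 1/2) N₁, ← hcr]
      exact (Real.rpow_le_rpow_left_iff hc).mpr hrN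
    have hfin : 1 / Real.sqrt 2 ≤ F 0 * (F 0 + 1/2) ^ (N₁:ℕ) := by
      have h3 : F 0 * (F 0 * Real.sqrt 2)⁻¹ = 1 / Real.sqrt 2 := by
        field_simp
      calc 1 / Real.sqrt 2 = F 0 * (F 0 * Real.sqrt 2)⁻¹ := h3.symm
        _ ≤ F 0 * (F 0 + 1/2) ^ (N₁:ℕ) := mul_le_mul_of_nonneg_left hcN (by linarith)
    have := growth N₁ le_rfl
    have := hall N₁ le_rfl
    linarith
  obtain ⟨n₁, hn₁le, hn₁⟩ := phase1
  -- phase 2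
  refine ⟨n₁ + N₂, Nat.add_le_add_right hn₁le N₂, ?_⟩
  obtain ⟨hl₁, hr₁⟩ := hbound n₁
  obtain ⟨hlm, hrm⟩ := hbound (n₁ + N₂)
  have h23 : (2:ℝ)/3 ≤ F n₁ := by
    have hs32 : Real.sqrt 2 ≤ 3/2 := by
      nlinarith [hsq, hs2pos]
    have : (2:ℝ)/3 ≤ 1 / Real.sqrt 2 := by
      rw [div_le_div_iff₀ (by norm_num) hs2pos]
      nlinarith [hsq, hs2pos]
    linarith
  have hx₁ : (2:ℝ) ≤ F n₁ / (1 - F n₁) := by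
    rw [le_div_iff₀ (by linarith : (0:ℝ) < 1 - F n₁)]
    linarith
  have hxm : F (n₁ + N₂) / (1 - F (n₁ + N₂)) = (F n₁ / (1 - F n₁)) ^ (2^N₂) :=
    hxpow n₁ N₂
  have hpow : (2:ℝ) ^ (2^N₂ : ℕ) ≤ (F n₁ / (1 - F n₁)) ^ (2^N₂ : ℕ) :=
    pow_le_pow_left₀ (by norm_num) hx₁ _
  -- 2 ^ (2^N₂) ≥ 1/ε
  have hinv2 : (2:ℝ) < 1 / ε := by
    rw [lt_div_iff₀ hε0]; linarith
  have hloge : 1 < Real.logb 2 (1/ε) := by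
    have := Real.logb_lt_logb (by norm_num : (1:ℝ) < 2) (by norm_num) hinv2
    simpa using this
  have hN₂le : Real.logb 2 (Real.logb 2 (1/ε)) ≤ (N₂:ℝ) := by
    rw [hN₂]; exact Nat.le_ceil _
  have h2N₂ : Real.logb 2 (1/ε) ≤ ((2:ℝ) ^ (N₂:ℕ) : ℝ) := by
    have h1' : Real.logb 2 (1/ε) = (2:ℝ) ^ (Real.logb 2 (Real.logb 2 (1/ε))) :=
      (Real.rpow_logb (by norm_num) (by norm_num) (by linarith)).symm
    calc Real.logb 2 (1/ε) = (2:ℝ) ^ (Real.logb 2 (Real.logb 2 (1/ε))) := h1'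
      _ ≤ (2:ℝ) ^ ((N₂:ℕ):ℝ) :=
          (Real.rpow_le_rpow_left_iff (by norm_num : (1:ℝ) < 2)).mpr hN₂le
      _ = (2:ℝ) ^ (N₂:ℕ) := Real.rpow_natCast 2 N₂
  have hbig : 1/ε ≤ (2:ℝ) ^ (2^N₂ : ℕ) := by
    have hcast : ((2^N₂ : ℕ) : ℝ) = (2:ℝ) ^ (N₂:ℕ) := by push_cast; ring
    calc 1/ε = (2:ℝ) ^ (Real.logb 2 (1/ε)) :=
          (Real.rpow_logb (by norm_num) (by norm_num) (by positivity)).symm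
      _ ≤ (2:ℝ) ^ (((2^N₂ : ℕ) : ℝ)) := by
          rw [hcast]
          exact (Real.rpow_le_rpow_left_iff (by norm_num : (1:ℝ) < 2)).mpr h2N₂
      _ = (2:ℝ) ^ (2^N₂ : ℕ) := Real.rpow_natCast 2 _
  have hxbig : (1 - ε)/ε ≤ F (n₁ + N₂) / (1 - F (n₁ + N₂)) := by
    have h1e : (1 - ε)/ε ≤ 1/ε := by
      rw [div_le_div_iff₀ hε0 hε0]
      nlinarith
    calc (1 - ε)/ε ≤ 1/ε := h1e
      _ ≤ (2:ℝ) ^ (2^N₂ : ℕ) := hbig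
      _ ≤ (F n₁ / (1 - F n₁)) ^ (2^N₂ : ℕ) := hpow
      _ = F (n₁ + N₂) / (1 - F (n₁ + N₂)) := hxm.symm
  -- conclude
  rw [ge_iff_le]
  have hcross : (1 - ε) * (1 - F (n₁ + N₂)) ≤ ε * F (n₁ + N₂) := by
    have h1m : (0:ℝ) < 1 - F (n₁ + N₂) := by linarith
    rw [div_le_div_iff₀ hε0 h1m] at hxbig
    linarith
  nlinarith [hcross]
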